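/- Let q ≥ 4 be a power of 2. Then the number of conjugacy classes of SL(2, q) is q + 1. -/

import Mathlib

open Matrix

section Aux

variable {F : Type*} [Field F] [Fintype F]

/-- Companion-type matrix with trace `t` and determinant `1`. -/
def sl2Companion (t : F) : Matrix.SpecialLinearGroup (Fin 2) F :=
  ⟨!![0, -1; 1, t], by simp [Matrix.det_fin_two_of]⟩

lemma sl2_trace_conj_invariant {A B : Matrix.SpecialLinearGroup (Fin 2) F}
    (h : IsConj A B) : Matrix.trace (A : Matrix (Fin 2) (Fin 2) F) = Matrix.trace (B : Matrix (Fin 2) (Fin 2) F) := by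
  obtain ⟨c, hc⟩ := isConj_iff.mp h
  subst hc
  simp only [Matrix.SpecialLinearGroup.coe_mul]
  rw [Matrix.trace_mul_cycle]
  rw [show ((c⁻¹ : Matrix.SpecialLinearGroup (Fin 2) F) : Matrix (Fin 2) (Fin 2) F) *
      (c : Matrix (Fin 2) (Fin 2) F) = 1 by
    rw [← Matrix.SpecialLinearGroup.coe_mul, inv_mul_cancel,
      Matrix.SpecialLinearGroup.coe_one]]
  rw [one_mul]

/-- If a nonsingular matrix semiconjugates two SL2 elements and squares are surjective,
then they are conjugate in SL2. -/
lemma sl2_isConj_of_semiconj (hsq : ∀ a : F, IsSquare a)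
    (A B : Matrix.SpecialLinearGroup (Fin 2) F) (P : Matrix (Fin 2) (Fin 2) F)
    (hP : P.det ≠ 0) (h : P * (A : Matrix (Fin 2) (Fin 2) F) = (B : Matrix (Fin 2) (Fin 2) F) * P) :
    IsConj A B := by
  obtain ⟨c, hc⟩ := hsq (P.det)⁻¹
  have hc0 : c ≠ 0 := by
    intro h0
    rw [h0, mul_zero] at hc
    exact hP (inv_eq_zero.mp hc)
  have hdetQ : (c • P).det = 1 := by
    rw [Matrix.det_smul, Fintype.card_fin, pow_two, ← hc, inv_mul_cancel₀ hP]
  refine isConj_iff.mpr ⟨⟨c • P, hdetQ⟩, ?_⟩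
  apply mul_inv_eq_of_eq_mul
  apply Subtype.ext
  show c • P * (A : Matrix (Fin 2) (Fin 2) F) = (B : Matrix (Fin 2) (Fin 2) F) * (c • P)
  rw [Matrix.smul_mul, Matrix.mul_smul, h]

lemma sl2_isConj_companion (hsq : ∀ a : F, IsSquare a) (htwo : (2 : F) = 0)
    (A : Matrix.SpecialLinearGroup (Fin 2) F) (hA : A ≠ 1) :
    IsConj (sl2Companion (Matrix.trace (A : Matrix (Fin 2) (Fin 2) F))) A := by
  set M : Matrix (Fin 2) (Fin 2) F := (A : Matrix (Fin 2) (Fin 2) F) with hM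
  have hdet : M.det = 1 := A.2
  set a := M 0 0; set b := M 0 1; set c := M 1 0; set d := M 1 1
  have hMeta : M = !![a, b; c, d] := Matrix.eta_fin_two M
  clear_value a b c d
  have hdet' : a * d - b * c = 1 := by
    rw [hMeta, Matrix.det_fin_two_of] at hdet; exact hdet
  have htr : Matrix.trace M = a + d := by rw [hMeta]; simp [Matrix.trace_fin_two]
  have key : ∀ P : Matrix (Fin 2) (Fin 2) F, P.det ≠ 0 →
      P * !![0, -1; 1, a + d] = M * P →
      IsConj (sl2Companion (Matrix.trace M)) A := by
    intro P hP h
    refine sl2_isConj_of_semiconj hsq _ _ P hP ?_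
    rw [htr]
    exact h
  by_cases hc : c ≠ 0
  · refine key !![1, a; 0, c] (by simpa [Matrix.det_fin_two_of] using hc) ?_
    rw [hMeta]
    ext i j
    fin_cases i <;> fin_cases j <;>
      simp [Matrix.mul_apply, Fin.sum_univ_two]
    all_goals try ring1
    all_goals try linear_combination hdet'
    all_goals try linear_combination -hdet'
  · push_neg at hc
    by_cases hb : b ≠ 0
    · refine key !![0, b; 1, d] (by simpa [Matrix.det_fin_two_of] using hb) ?_
      rw [hMeta]
      ext i j
      fin_cases i <;> fin_cases j <;>
        simp [Matrix.mul_apply, Fin.sum_univ_two]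
      all_goals try ring1
      all_goals try linear_combination hdet'
      all_goals try linear_combination -hdet'
    · push_neg at hb
      by_cases had : a = d
      · exfalso
        apply hA
        have hdet'' : a * a - 0 * 0 = 1 := by rw [hb, hc, ← had] at hdet'; exact hdet'
        have ha1 : a = 1 := by
          have hz : (a - 1) ^ 2 = 0 := by linear_combination hdet'' + (1 - a) * htwo
          have := pow_eq_zero_iff (n := 2) (by norm_num) |>.mp hz
          exact sub_eq_zero.mp this
        apply Subtype.ext
        show M = _
        rw [hMeta, hb, hc, ← had, ha1, Matrix.SpecialLinearGroup.coe_one]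
        exact (Matrix.one_fin_two).symm
      · refine key !![1, a; 1, d] ?_ ?_
        · simp only [Matrix.det_fin_two_of, one_mul, mul_one]
          exact sub_ne_zero.mpr (Ne.symm had)
        · rw [hMeta]
          ext i j
          fin_cases i <;> fin_cases j <;>
            simp [Matrix.mul_apply, Fin.sum_univ_two, hb, hc]
          all_goals try ring1
          all_goals try linear_combination hdet'
          all_goals try linear_combination -hdet'
          all_goals try linear_combination hdet' + c * hb

end Aux

theorem sl2_num_conjClasses_char_two (q : ℕ) (hq : 4 ≤ q) (hpow : ∃ k : ℕ, q = 2 ^ k)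
    (F : Type*) [Field F] [Fintype F] (hcard : Fintype.card F = q) :
    Nat.card (ConjClasses (Matrix.SpecialLinearGroup (Fin 2) F)) = q + 1 := by
  obtain ⟨k, rfl⟩ := hpow
  -- characteristic is 2
  have hchar : ringChar F = 2 := by
    obtain ⟨n, hp, hcard'⟩ := FiniteField.card F (ringChar F)
    rw [hcard] at hcard'
    have hdvd : ringChar F ∣ 2 := hp.dvd_of_dvd_pow
      (hcard' ▸ dvd_pow_self (ringChar F) n.ne_zero : ringChar F ∣ 2 ^ k)
    exact (Nat.prime_dvd_prime_iff_eq hp Nat.prime_two).mp hdvd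
  have htwo : (2 : F) = 0 := by
    haveI : CharP F 2 := hchar ▸ ringChar.charP F
    exact_mod_cast CharP.cast_eq_zero F 2
  have hsq : ∀ a : F, IsSquare a := FiniteField.isSquare_of_char_two hchar
  -- the classification map
  set G := Matrix.SpecialLinearGroup (Fin 2) F
  let f : Option F → ConjClasses G := fun o =>
    match o with
    | none => ConjClasses.mk 1
    | some t => ConjClasses.mk (sl2Companion t)
  have hcomp_ne_one : ∀ t : F, sl2Companion t ≠ 1 := by
    intro t h
    have := congrArg (fun X : G => (X : Matrix (Fin 2) (Fin 2) F) 1 0) h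
    simp [sl2Companion] at this
  have hcomp_tr : ∀ t : F, Matrix.trace ((sl2Companion t : G) : Matrix (Fin 2) (Fin 2) F) = t := by
    intro t
    simp [sl2Companion, Matrix.trace_fin_two]
  have hbij : Function.Bijective f := by
    constructor
    · rintro (_ | s) (_ | t) h <;> simp only [f] at h
      · rfl
      · exact absurd (isConj_one_right.mp (ConjClasses.mk_eq_mk_iff_isConj.mp h))
          (hcomp_ne_one t)
      · exact absurd (isConj_one_left.mp (ConjClasses.mk_eq_mk_iff_isConj.mp h))
          (hcomp_ne_one s)
      · have := sl2_trace_conj_invariant (ConjClasses.mk_eq_mk_iff_isConj.mp h)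
        rw [hcomp_tr, hcomp_tr] at this
        rw [this]
    · intro x
      obtain ⟨A, rfl⟩ := ConjClasses.exists_rep x
      by_cases hA : A = 1
      · exact ⟨none, by simp [f, hA]⟩
      · exact ⟨some (Matrix.trace (A : Matrix (Fin 2) (Fin 2) F)),
          ConjClasses.mk_eq_mk_iff_isConj.mpr (sl2_isConj_companion hsq htwo A hA)⟩
  have := Nat.card_eq_of_bijective f hbij
  rw [← this, Nat.card_eq_fintype_card, Fintype.card_option, hcard]
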